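/- Let p be a probability density function on ℝ^d and r a measurable function on ℝ^d with ∫ r = 0 and sup_x |r(x)/p(x)| =: M < ∞. Then for all real ε with |ε| < 1/(2M), we have |∫ (p+εr)ln(p+εr) − ∫ p ln p − ε ∫ r ln p − (ε²/2) ∫ r²/p| ≤ ε³ M³ (up to an absolute constant), i.e., ∫(p+εr)ln(p+εr) = ∫ p ln p + ε∫ r ln p + (ε²/2)∫ r²/p + O(ε³). -/

import Mathlib

open MeasureTheory Real

lemma taylor_bound_aux {t : ℝ} (ht : |t| ≤ 1/2) :
    |(1+t) * Real.log (1+t) - t - t^2/2| ≤ 4 * |t|^3 := by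
  have habs := abs_le.1 ht
  have h1 : |(-t)| < 1 := by rw [abs_neg]; linarith [abs_nonneg t]
  have h2 := Real.abs_log_sub_add_sum_range_le h1 2
  simp only [Finset.sum_range_succ, Finset.sum_range_zero, abs_neg] at h2
  norm_num at h2
  set e := Real.log (1+t) - t + t^2/2 with he
  have he2 : |e| ≤ 2 * |t|^3 := by
    have hb : |t|^3 / (1 - |t|) ≤ |t|^3 / (1/2) := by
      apply div_le_div_of_nonneg_left (by positivity) (by norm_num) (by linarith)
    have h3 : |e| ≤ |t|^3 / (1 - |t|) := by
      refine le_trans (le_of_eq ?_) h2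
      rw [he]
      congr 1
      ring_nf
    calc |e| ≤ |t|^3 / (1/2) := h3.trans hb
      _ = 2 * |t|^3 := by ring
  have heq : (1+t) * Real.log (1+t) - t - t^2/2 = -t^3/2 + (1+t)*e := by
    have hl : Real.log (1+t) = t - t^2/2 + e := by rw [he]; ring
    rw [hl]; ring
  rw [heq]
  have h1t : |1 + t| ≤ 3/2 := by rw [abs_le]; constructor <;> linarith
  calc |(-t^3/2) + (1+t)*e| ≤ |(-t^3/2)| + |(1+t)*e| := abs_add_le _ _
    _ = |t|^3/2 + |1+t| * |e| := by
        rw [abs_mul]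
        congr 1
        rw [abs_div, abs_neg, abs_pow]
        norm_num
    _ ≤ |t|^3/2 + (3/2) * (2*|t|^3) := by
        have h0 : 0 ≤ |e| := abs_nonneg _
        have h3 : |1+t| * |e| ≤ (3/2) * (2*|t|^3) := by
          nlinarith [abs_nonneg (1+t)]
        linarith
    _ ≤ 4 * |t|^3 := by nlinarith [abs_nonneg t, pow_nonneg (abs_nonneg t) 3]

lemma key_pointwise {a b : ℝ} (ha : 0 < a) (hb : |b| ≤ a / 2) :
    |(a + b) * Real.log (a + b) - a * Real.log a - b * Real.log a - b - b ^ 2 / (2 * a)|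
      ≤ 4 * |b| ^ 3 / a ^ 2 := by
  obtain ⟨t, rfl⟩ : ∃ t, b = a * t := ⟨b / a, by field_simp⟩
  have ht : |t| ≤ 1/2 := by
    rw [abs_mul, abs_of_pos ha] at hb
    nlinarith
  have habs := abs_le.1 ht
  have h1t : 0 < 1 + t := by linarith
  have heq : (a + a * t) * Real.log (a + a * t) - a * Real.log a
      - (a * t) * Real.log a - (a * t) - (a * t) ^ 2 / (2 * a)
      = a * ((1+t) * Real.log (1+t) - t - t^2/2) := by
    have hab : a + a * t = a * (1 + t) := by ring
    rw [hab, Real.log_mul ha.ne' h1t.ne']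
    field_simp
    ring
  rw [heq, abs_mul, abs_of_pos ha]
  calc a * |(1+t) * Real.log (1+t) - t - t^2/2| ≤ a * (4 * |t|^3) :=
        mul_le_mul_of_nonneg_left (taylor_bound_aux ht) ha.le
    _ = 4 * |a * t| ^ 3 / a ^ 2 := by
        rw [abs_mul, abs_of_pos ha]
        field_simp

theorem stmt_13 :
    ∃ C : ℝ, 0 < C ∧
      ∀ (d : ℕ) (p r : EuclideanSpace ℝ (Fin d) → ℝ) (M : ℝ),
        Measurable p → Measurable r →
        (∀ x, 0 ≤ p x) → (∫ x, p x = 1) → (∫ x, r x = 0) →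
        (∀ x, |r x| ≤ M * p x) →
        Integrable (fun x => p x * Real.log (p x)) →
        Integrable (fun x => r x * Real.log (p x)) →
        Integrable (fun x => r x ^ 2 / p x) →
        ∀ ε : ℝ, |ε| < 1 / (2 * M) →
          |(∫ x, (p x + ε * r x) * Real.log (p x + ε * r x))
              - (∫ x, p x * Real.log (p x)) - ε * (∫ x, r x * Real.log (p x))
              - ε ^ 2 / 2 * (∫ x, r x ^ 2 / p x)|
            ≤ C * |ε| ^ 3 * M ^ 3 := by
  refine ⟨4, by norm_num, ?_⟩
  intro d p r M hp hr hp0 hp1 hr0 hrM hA hB hD ε hε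
  have hM : 0 < M := by
    by_contra h
    push_neg at h
    have h2M : 1 / (2 * M) ≤ 0 := by
      rcases lt_or_eq_of_le h with h' | h'
      · exact le_of_lt (div_neg_of_pos_of_neg one_pos (by linarith))
      · simp [h']
    linarith [abs_nonneg ε]
  have hεM : |ε| * M ≤ 1 / 2 := by
    rw [lt_div_iff₀ (by positivity)] at hε
    nlinarith
  have hpint : Integrable p := by
    by_contra h
    rw [integral_undef h] at hp1; norm_num at hp1
  set c : ℝ := 4 * |ε|^3 * M^3 with hc
  set g : EuclideanSpace ℝ (Fin d) → ℝ := fun x =>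
    (p x + ε * r x) * Real.log (p x + ε * r x) - p x * Real.log (p x)
      - ε * (r x * Real.log (p x)) - ε * r x - ε^2/2 * (r x^2 / p x) with hg
  have hgbound : ∀ x, |g x| ≤ c * p x := by
    intro x
    rcases eq_or_lt_of_le (hp0 x) with h0 | h0
    · have hr0x : r x = 0 := by
        have h := hrM x
        rw [← h0, mul_zero] at h
        exact abs_eq_zero.mp (le_antisymm h (abs_nonneg _))
      simp [hg, ← h0, hr0x]
    · have hbb : |ε * r x| ≤ p x / 2 := by
        rw [abs_mul]
        calc |ε| * |r x| ≤ |ε| * (M * p x) :=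
              mul_le_mul_of_nonneg_left (hrM x) (abs_nonneg ε)
          _ = (|ε| * M) * p x := by ring
          _ ≤ 1/2 * p x := mul_le_mul_of_nonneg_right hεM h0.le
          _ = p x / 2 := by ring
      have hkey := key_pointwise h0 hbb
      have hgx : g x = (p x + ε * r x) * Real.log (p x + ε * r x)
          - p x * Real.log (p x) - (ε * r x) * Real.log (p x) - (ε * r x)
          - (ε * r x)^2 / (2 * p x) := by
        simp only [hg]
        ring
      rw [hgx]
      refine hkey.trans ?_
      rw [div_le_iff₀ (by positivity)]
      have h1 : |ε * r x| ≤ |ε| * M * p x := by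
        rw [abs_mul, mul_assoc]
        exact mul_le_mul_of_nonneg_left (hrM x) (abs_nonneg ε)
      have h2 : |ε * r x|^3 ≤ (|ε| * M * p x)^3 :=
        pow_le_pow_left₀ (abs_nonneg _) h1 3
      calc 4 * |ε * r x|^3 ≤ 4 * (|ε| * M * p x)^3 := by linarith
        _ = c * p x * p x ^ 2 := by rw [hc]; ring
  have hgm : AEStronglyMeasurable g volume := by
    have hlogp : Measurable fun x => Real.log (p x) := Real.measurable_log.comp hp
    have hlogq : Measurable fun x => Real.log (p x + ε * r x) :=
      Real.measurable_log.comp (hp.add (hr.const_mul ε))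
    exact (((((hp.add (hr.const_mul ε)).mul hlogq).sub (hp.mul hlogp)).sub
      ((hr.mul hlogp).const_mul ε)).sub (hr.const_mul ε)).sub
        (((hr.pow_const 2).div hp).const_mul (ε^2/2)) |>.aestronglyMeasurable
  have hgi : Integrable g := by
    refine Integrable.mono' (hpint.const_mul c) hgm ?_
    filter_upwards with x
    simpa using hgbound x
  have hri : Integrable r := by
    refine Integrable.mono' (hpint.const_mul M) hr.aestronglyMeasurable ?_
    filter_upwards with x
    simpa using hrM x
  have hFi : Integrable (fun x => (p x + ε * r x) * Real.log (p x + ε * r x)) := by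
    have hFeq : (fun x => (p x + ε * r x) * Real.log (p x + ε * r x))
        = fun x => g x + (p x * Real.log (p x)
            + (ε * (r x * Real.log (p x)) + (ε * r x + ε^2/2 * (r x^2 / p x)))) := by
      funext x; simp only [hg]; ring
    rw [hFeq]
    exact hgi.add (hA.add ((hB.const_mul ε).add ((hri.const_mul ε).add (hD.const_mul _))))
  have I2 : Integrable (fun x => (p x + ε * r x) * Real.log (p x + ε * r x)
      - p x * Real.log (p x)) := hFi.sub hA
  have I3 : Integrable (fun x => (p x + ε * r x) * Real.log (p x + ε * r x)
      - p x * Real.log (p x) - ε * (r x * Real.log (p x))) := I2.sub (hB.const_mul ε)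
  have I4 : Integrable (fun x => (p x + ε * r x) * Real.log (p x + ε * r x)
      - p x * Real.log (p x) - ε * (r x * Real.log (p x)) - ε * r x) :=
    I3.sub (hri.const_mul ε)
  have hsum : ∫ x, g x = (∫ x, (p x + ε * r x) * Real.log (p x + ε * r x))
      - (∫ x, p x * Real.log (p x)) - ε * (∫ x, r x * Real.log (p x))
      - ε ^ 2 / 2 * (∫ x, r x ^ 2 / p x) := by
    simp only [hg]
    rw [integral_sub I4 (hD.const_mul _), integral_sub I3 (hri.const_mul ε),
      integral_sub I2 (hB.const_mul ε), integral_sub hFi hA,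
      integral_const_mul, integral_const_mul, integral_const_mul, hr0, mul_zero, sub_zero]
  rw [← hsum]
  calc |∫ x, g x| = ‖∫ x, g x‖ := (Real.norm_eq_abs _).symm
    _ ≤ ∫ x, ‖g x‖ := norm_integral_le_integral_norm _
    _ = ∫ x, |g x| := by simp [Real.norm_eq_abs]
    _ ≤ ∫ x, c * p x := integral_mono hgi.abs (hpint.const_mul c) hgbound
    _ = c := by rw [integral_const_mul, hp1, mul_one]
    _ = 4 * |ε| ^ 3 * M ^ 3 := hc
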